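/- If V is a finite dimensional real vector space, then any two probabilistic norms ν of (V, ν, τ, τ*) and μ of (V, μ, τ', τ'*) are equivalent (a sequence converges strongly in ν iff it converges strongly in μ), provided τ* and τ'* are Archimedean and ν_p ≠ ε_∞, μ_p ≠ ε_∞ for every p ∈ V. -/

import Mathlib

open Filter Topology

noncomputable section

/-- A distance distribution function: nondecreasing, left-continuous,
vanishing on `(-∞,0]`, bounded by `1`. -/
def DDF (F : ℝ → ℝ) : Prop :=
  Monotone F ∧ (∀ x ≤ 0, F x = 0) ∧ (∀ x, F x ≤ 1) ∧
    ∀ x, Tendsto F (nhdsWithin x (Set.Iio x)) (nhds (F x))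

/-- The unit step at `0`. -/
def eps0 : ℝ → ℝ := fun x => if x ≤ 0 then 0 else 1

/-- The unit step at `c`. -/
def epsc (c : ℝ) : ℝ → ℝ := fun x => if x ≤ c then 0 else 1

/-- `ε∞`: identically 0 on `ℝ` (value 1 only at `+∞`). -/
def epsInf : ℝ → ℝ := fun _ => 0

/-- Membership in `D⁺`: the distribution function tends to `1` at `+∞`. -/
def InDPlus (F : ℝ → ℝ) : Prop := Tendsto F atTop (nhds 1)

/-- Weak convergence of distribution functions. -/
def WeakConv (Fn : ℕ → ℝ → ℝ) (F : ℝ → ℝ) : Prop :=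
  ∀ x, ContinuousAt F x → Tendsto (fun n => Fn n x) atTop (nhds (F x))

/-- A continuous triangle function on `Δ⁺`. -/
def IsTriangleFunction (τ : (ℝ → ℝ) → (ℝ → ℝ) → (ℝ → ℝ)) : Prop :=
  (∀ F G, DDF F → DDF G → DDF (τ F G)) ∧
  (∀ F G H, DDF F → DDF G → DDF H → τ (τ F G) H = τ F (τ G H)) ∧
  (∀ F G, DDF F → DDF G → τ F G = τ G F) ∧
  (∀ F G H, DDF F → DDF G → DDF H → F ≤ G → τ F H ≤ τ G H) ∧
  (∀ F, DDF F → τ F eps0 = F) ∧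
  (∀ (Fn : ℕ → ℝ → ℝ) F G, (∀ n, DDF (Fn n)) → DDF F → DDF G →
    WeakConv Fn F → WeakConv (fun n => τ (Fn n) G) (τ F G))

/-- A probabilistic normed space `(V, ν, τ, τ*)`. -/
structure IsPNSpace (V : Type) [AddCommGroup V] [Module ℝ V]
    (ν : V → ℝ → ℝ) (τ τs : (ℝ → ℝ) → (ℝ → ℝ) → (ℝ → ℝ)) : Prop where
  ddf : ∀ p, DDF (ν p)
  tri : IsTriangleFunction τ
  tris : IsTriangleFunction τs
  tle : ∀ F G, DDF F → DDF G → τ F G ≤ τs F G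
  n1 : ∀ p, ν p = eps0 ↔ p = 0
  n2 : ∀ p, ν (-p) = ν p
  n3 : ∀ p q, τ (ν p) (ν q) ≤ ν (p + q)
  n4 : ∀ (p : V) (l : ℝ), 0 ≤ l → l ≤ 1 →
    ν p ≤ τs (ν (l • p)) (ν ((1 - l) • p))

/-- Archimedean triangle function: no idempotents besides `ε₀` and `ε∞`. -/
def IsArchimedean (τ : (ℝ → ℝ) → (ℝ → ℝ) → (ℝ → ℝ)) : Prop :=
  ∀ F, DDF F → τ F F = F → F = eps0 ∨ F = epsInf

/-- Strong convergence of a sequence in a PN space. -/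
def StrongConv {V : Type} [AddCommGroup V] (ν : V → ℝ → ℝ)
    (q : ℕ → V) (p : V) : Prop :=
  ∀ l : ℝ, 0 < l → ∀ᶠ n in atTop, ν (q n - p) l > 1 - l

/-- Strongly Cauchy sequence in a PN space. -/
def StrongCauchy {V : Type} [AddCommGroup V] (ν : V → ℝ → ℝ) (q : ℕ → V) : Prop :=
  ∀ l : ℝ, 0 < l → ∃ N, ∀ m n, N ≤ m → N ≤ n → ν (q m - q n) l > 1 - l

/-- `A` is `D`-bounded: some `G ∈ D⁺` lies below all `ν p`, `p ∈ A`. -/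
def DBounded {V : Type} (ν : V → ℝ → ℝ) (A : Set V) : Prop :=
  ∃ G : ℝ → ℝ, DDF G ∧ InDPlus G ∧ ∀ p ∈ A, G ≤ ν p

/-- `A` is `D`-compact: every sequence in `A` has a subsequence strongly
convergent to a point of `A`. -/
def DCompact {V : Type} [AddCommGroup V] (ν : V → ℝ → ℝ) (A : Set V) : Prop :=
  ∀ q : ℕ → V, (∀ n, q n ∈ A) → ∃ φ : ℕ → ℕ, StrictMono φ ∧
    ∃ p ∈ A, StrongConv ν (q ∘ φ) p

/-- `A` is closed under strong convergence of sequences. -/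
def SeqClosed {V : Type} [AddCommGroup V] (ν : V → ℝ → ℝ) (A : Set V) : Prop :=
  ∀ (q : ℕ → V) (p : V), (∀ n, q n ∈ A) → StrongConv ν q p → p ∈ A

/-- The probabilistic radius `R_A(x) = l⁻ inf {ν p x : p ∈ A}`. -/
def probRadius {V : Type} (ν : V → ℝ → ℝ) (A : Set V) (x : ℝ) : ℝ :=
  ⨆ y : Set.Iio x, ⨅ p : A, ν (p : V) (y : ℝ)


namespace PNAux

/-! ### Basic DDF lemmas -/

lemma ddf_nonneg {F : ℝ → ℝ} (hF : DDF F) (x : ℝ) : 0 ≤ F x := by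
  rcases le_or_gt x 0 with h | h
  · rw [hF.2.1 x h]
  · have h0 : F 0 ≤ F x := hF.1 h.le
    rwa [hF.2.1 0 le_rfl] at h0

/-- Step function of height `1 - e` with jump at `a`. -/
def Kf (a e : ℝ) : ℝ → ℝ := fun x => if x ≤ a then 0 else 1 - e

lemma Kf_ddf {a e : ℝ} (ha : 0 ≤ a) (he0 : 0 ≤ e) (he1 : e ≤ 1) : DDF (Kf a e) := by
  refine ⟨?_, ?_, ?_, ?_⟩
  · intro x y hxy
    unfold Kf
    by_cases hx : x ≤ a <;> by_cases hy : y ≤ a <;> simp [hx, hy] <;> linarith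
  · intro x hx
    exact if_pos (hx.trans ha)
  · intro x
    unfold Kf
    split_ifs <;> linarith
  · intro x
    rcases le_or_gt x a with h | h
    · have hval : Kf a e x = 0 := if_pos h
      rw [hval]
      refine tendsto_nhdsWithin_congr (f := fun _ => (0:ℝ)) ?_ tendsto_const_nhds
      intro y hy
      exact (if_pos ((le_of_lt hy).trans h)).symm
    · have hval : Kf a e x = 1 - e := if_neg (not_le.2 h)
      rw [hval]
      have hmem : Set.Ioo a x ∈ 𝓝[<] x := Ioo_mem_nhdsLT_of_mem ⟨h, le_rfl⟩
      refine Tendsto.congr' ?_ (tendsto_const_nhds (x := (1 - e : ℝ)))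
      filter_upwards [hmem] with y hy
      exact (if_neg (not_le.2 hy.1)).symm

lemma Kf_le_Kf {a a' e e' : ℝ} (haa : a' ≤ a) (hee : e' ≤ e) (he1 : e ≤ 1) :
    Kf a e ≤ Kf a' e' := by
  intro x
  unfold Kf
  by_cases hx : x ≤ a <;> by_cases hx' : x ≤ a' <;> simp [hx, hx'] <;> linarith

lemma Kf_le_of_ddf {F : ℝ → ℝ} (hF : DDF F) {a e : ℝ} (h : 1 - e < F a) : Kf a e ≤ F := by
  intro x
  unfold Kf
  split_ifs with hx
  · exact ddf_nonneg hF x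
  · exact le_of_lt (lt_of_lt_of_le h (hF.1 (le_of_not_ge hx)))

lemma eps0_eq_Kf : eps0 = Kf 0 0 := by
  funext x; simp [eps0, Kf]

lemma ddf_eps0 : DDF eps0 := by
  rw [eps0_eq_Kf]; exact Kf_ddf le_rfl le_rfl zero_le_one

lemma ddf_le_eps0 {F : ℝ → ℝ} (hF : DDF F) : F ≤ eps0 := by
  intro x
  unfold eps0
  split_ifs with h
  · exact le_of_eq (hF.2.1 x h)
  · exact hF.2.2.1 x

lemma eps0_pos {l : ℝ} (hl : 0 < l) : eps0 l = 1 := if_neg (not_le.2 hl)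

lemma ddf_left_approx {F : ℝ → ℝ} (hF : DDF F) (x d : ℝ) (hd : 0 < d) :
    ∃ y < x, F x - d < F y := by
  have h := hF.2.2.2 x
  have hev : ∀ᶠ y in 𝓝[<] x, F x - d < F y :=
    h.eventually_const_lt (by linarith)
  obtain ⟨y, hy1, hy2⟩ := (hev.and self_mem_nhdsWithin).exists
  exact ⟨y, hy2, hy1⟩

lemma eps0_of_forall {F : ℝ → ℝ} (hF : DDF F) (h : ∀ l, 0 < l → 1 - l < F l) :
    F = eps0 := by
  funext x
  rcases le_or_gt x 0 with hx | hx
  · rw [hF.2.1 x hx, eps0, if_pos hx]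
  · have h1 : F x = 1 := by
      refine le_antisymm (hF.2.2.1 x) ?_
      by_contra hcon
      push_neg at hcon
      have hd0 : (0:ℝ) < 1 - F x := by linarith
      have hl : 0 < min x (1 - F x) := lt_min hx hd0
      have h2 := h _ hl
      have h3 : F (min x (1 - F x)) ≤ F x := hF.1 (min_le_left _ _)
      have h4 := min_le_right x (1 - F x)
      linarith
    rw [h1, eps0, if_neg (not_le.2 hx)]

/-! ### Triangle function lemmas -/

variable {τ : (ℝ → ℝ) → (ℝ → ℝ) → (ℝ → ℝ)}

lemma tri_mono_right (ht : IsTriangleFunction τ) {F G G' : ℝ → ℝ}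
    (hF : DDF F) (hG : DDF G) (hG' : DDF G') (h : G ≤ G') : τ F G ≤ τ F G' := by
  rw [ht.2.2.1 F G hF hG, ht.2.2.1 F G' hF hG']
  exact ht.2.2.2.1 G G' F hG hG' hF h

lemma tri_le_left (ht : IsTriangleFunction τ) {F G : ℝ → ℝ}
    (hF : DDF F) (hG : DDF G) : τ F G ≤ F := by
  calc τ F G ≤ τ F eps0 := tri_mono_right ht hF hG ddf_eps0 (ddf_le_eps0 hG)
  _ = F := ht.2.2.2.2.1 F hF

/-- Joint continuity of a triangle function at `(ε₀, ε₀)`. -/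
lemma tri_cont_zero (ht : IsTriangleFunction τ) {l : ℝ} (hl : 0 < l) :
    ∃ a : ℝ, 0 < a ∧ ∀ F G, DDF F → DDF G → 1 - a < F a → 1 - a < G a →
      1 - l < τ F G l := by
  have hl0 : 0 < min l 2⁻¹ := lt_min hl (by norm_num)
  have hl0l : min l 2⁻¹ ≤ l := min_le_left _ _
  have hl0h : min l 2⁻¹ ≤ 2⁻¹ := min_le_right _ _
  set l0 : ℝ := min l 2⁻¹ with hl0def
  set G0 : ℝ → ℝ := Kf (l0 / 2) (l0 / 2) with hG0def
  have hG0 : DDF G0 := Kf_ddf (by linarith) (by linarith) (by linarith)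
  set c : ℕ → ℝ := fun n => (l0 / 2) * (2⁻¹:ℝ) ^ n with hcdef
  have hc0 : ∀ n, 0 < c n := fun n => mul_pos (by linarith) (pow_pos (by norm_num) n)
  have hcle : ∀ n, c n ≤ l0 / 2 := by
    intro n
    have h1 : (2⁻¹:ℝ) ^ n ≤ 1 := pow_le_one₀ (by norm_num) (by norm_num)
    calc (l0 / 2) * (2⁻¹:ℝ) ^ n ≤ (l0 / 2) * 1 :=
          mul_le_mul_of_nonneg_left h1 (by linarith)
    _ = l0 / 2 := mul_one _
  have hcle1 : ∀ n, c n ≤ 1 := fun n => (hcle n).trans (by linarith)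
  have hFn : ∀ n, DDF (Kf (c n) (c n)) :=
    fun n => Kf_ddf (hc0 n).le (hc0 n).le (hcle1 n)
  have hctend : Tendsto c atTop (𝓝 0) := by
    have h1 := tendsto_pow_atTop_nhds_zero_of_lt_one
      (by norm_num : (0:ℝ) ≤ 2⁻¹) (by norm_num : (2⁻¹:ℝ) < 1)
    have h2 := h1.const_mul (l0 / 2)
    rw [mul_zero] at h2
    exact h2
  have hweak : WeakConv (fun n => Kf (c n) (c n)) eps0 := by
    intro x _
    rcases le_or_gt x 0 with hx | hx
    · have heq : ∀ n, Kf (c n) (c n) x = 0 := fun n => if_pos (hx.trans (hc0 n).le)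
      rw [show eps0 x = 0 from if_pos hx]
      exact tendsto_const_nhds.congr fun n => (heq n).symm
    · rw [eps0_pos hx]
      have hev : ∀ᶠ n in atTop, (1 : ℝ) - c n = Kf (c n) (c n) x := by
        filter_upwards [hctend.eventually_lt_const hx] with n hn
        exact (if_neg (not_le.2 hn)).symm
      have h2 : Tendsto (fun n => (1:ℝ) - c n) atTop (𝓝 1) := by
        have h3 := Filter.Tendsto.sub (f := fun _ : ℕ => (1:ℝ)) tendsto_const_nhds hctend
        rw [sub_zero] at h3
        exact h3
      exact h2.congr' hev
  have hcont := ht.2.2.2.2.2 (fun n => Kf (c n) (c n)) eps0 G0 hFn ddf_eps0 hG0 hweak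
  have hid : τ eps0 G0 = G0 := by
    rw [ht.2.2.1 eps0 G0 ddf_eps0 hG0]
    exact ht.2.2.2.2.1 G0 hG0
  have hG0l0 : G0 l0 = 1 - l0 / 2 := if_neg (by push_neg; linarith)
  have hcl0 : ContinuousAt (τ eps0 G0) l0 := by
    rw [hid]
    have hmem : Set.Ioi (l0 / 2) ∈ 𝓝 l0 := Ioi_mem_nhds (by linarith)
    refine (continuousAt_const (y := (1 - l0 / 2 : ℝ))).congr ?_
    filter_upwards [hmem] with y hy
    exact (if_neg (not_le.2 hy)).symm
  have htd := hcont l0 hcl0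
  rw [hid] at htd
  have hev2 : ∀ᶠ n in atTop, 1 - l0 < τ (Kf (c n) (c n)) G0 l0 :=
    htd.eventually_const_lt (by rw [hG0l0]; linarith)
  obtain ⟨N, hN⟩ := hev2.exists
  refine ⟨c N, hc0 N, ?_⟩
  intro F G hF hG hFa hGa
  have hFK : Kf (c N) (c N) ≤ F := Kf_le_of_ddf hF hFa
  have hGK : Kf (c N) (c N) ≤ G := Kf_le_of_ddf hG hGa
  have hG0G : G0 ≤ G := le_trans (Kf_le_Kf (hcle N) (hcle N) (by linarith)) hGK
  have step1 : τ (Kf (c N) (c N)) G0 l0 ≤ τ F G0 l0 :=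
    ht.2.2.2.1 (Kf (c N) (c N)) F G0 (hFn N) hF hG0 hFK l0
  have step2 : τ F G0 l0 ≤ τ F G l0 := tri_mono_right ht hF hG0 hG hG0G l0
  have step3 : τ F G l0 ≤ τ F G l := (ht.1 F G hF hG).1 hl0l
  have h1l : (1:ℝ) - l ≤ 1 - l0 := by linarith
  linarith

/-! ### PN space lemmas -/

variable {V : Type} [AddCommGroup V] [Module ℝ V]
  {ν : V → ℝ → ℝ} {τs : (ℝ → ℝ) → (ℝ → ℝ) → (ℝ → ℝ)}

lemma scalar_mono (hν : IsPNSpace V ν τ τs) (p : V) {s t : ℝ}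
    (hs : 0 ≤ s) (hst : s ≤ t) : ν (t • p) ≤ ν (s • p) := by
  rcases eq_or_lt_of_le (hs.trans hst) with ht | ht
  · have hs0 : s = 0 := le_antisymm (hst.trans ht.ge) hs
    rw [← ht, hs0]
  · have h4 := hν.n4 (t • p) (s / t) (div_nonneg hs ht.le) ((div_le_one ht).2 hst)
    have h1 : (s / t) • (t • p) = s • p := by
      rw [smul_smul, div_mul_cancel₀ _ (ne_of_gt ht)]
    rw [h1] at h4
    exact h4.trans (tri_le_left hν.tris (hν.ddf _) (hν.ddf _))

lemma nu_abs_smul (hν : IsPNSpace V ν τ τs) (t : ℝ) (p : V) :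
    ν (t • p) = ν (|t| • p) := by
  rcases abs_choice t with h | h
  · rw [h]
  · rw [h, neg_smul, hν.n2]

/-- Key Archimedean lemma: `ν (t • p) → ε₀` as `t → 0`. -/
lemma smul_null (hν : IsPNSpace V ν τ τs) (harch : IsArchimedean τs)
    (hne : ∀ p : V, ν p ≠ epsInf) (p : V) {l : ℝ} (hl : 0 < l) :
    ∃ δ : ℝ, 0 < δ ∧ ∀ t : ℝ, |t| ≤ δ → 1 - l < ν (t • p) l := by
  set F : ℕ → ℝ → ℝ := fun m => ν ((2⁻¹:ℝ) ^ m • p) with hFdef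
  have hFddf : ∀ m, DDF (F m) := fun m => hν.ddf _
  have hstep : ∀ m, F m ≤ τs (F (m + 1)) (F (m + 1)) := by
    intro m
    have h4 := hν.n4 ((2⁻¹:ℝ) ^ m • p) 2⁻¹ (by norm_num) (by norm_num)
    have e1 : (2⁻¹:ℝ) • ((2⁻¹:ℝ) ^ m • p) = (2⁻¹:ℝ) ^ (m + 1) • p := by
      rw [smul_smul, ← pow_succ']
    have e2 : ((1:ℝ) - 2⁻¹) • ((2⁻¹:ℝ) ^ m • p) = (2⁻¹:ℝ) ^ (m + 1) • p := by
      rw [show (1:ℝ) - 2⁻¹ = 2⁻¹ by norm_num, smul_smul, ← pow_succ']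
    rw [e1, e2] at h4
    exact h4
  set G : ℝ → ℝ := fun x => ⨆ m, F m x with hGdef
  have hbdd : ∀ x, BddAbove (Set.range fun m => F m x) := by
    intro x
    refine ⟨1, ?_⟩
    rintro y ⟨m, rfl⟩
    exact (hFddf m).2.2.1 x
  have hFleG : ∀ m x, F m x ≤ G x := fun m x => le_ciSup (hbdd x) m
  have hGle1 : ∀ x, G x ≤ 1 := fun x => ciSup_le fun m => (hFddf m).2.2.1 x
  have hGnn : ∀ x, 0 ≤ G x := fun x => le_trans (ddf_nonneg (hFddf 0) x) (hFleG 0 x)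
  have hG0 : ∀ x ≤ 0, G x = 0 := by
    intro x hx
    refine le_antisymm (ciSup_le fun m => le_of_eq ((hFddf m).2.1 x hx)) (hGnn x)
  set H : ℝ → ℝ := fun x => ⨆ y : Set.Iio x, G (y : ℝ) with hHdef
  have hbddH : ∀ x : ℝ, BddAbove (Set.range fun y : Set.Iio x => G (y : ℝ)) := by
    intro x
    refine ⟨1, ?_⟩
    rintro z ⟨y, rfl⟩
    exact hGle1 y
  have hGleH : ∀ y x : ℝ, y < x → G y ≤ H x := fun y x h => le_ciSup (hbddH x) ⟨y, h⟩
  have hHmono : Monotone H := by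
    intro x y hxy
    exact ciSup_le fun z => hGleH z.1 y (lt_of_lt_of_le z.2 hxy)
  have hHnn : ∀ x : ℝ, 0 ≤ H x := by
    intro x
    exact le_trans (hGnn (x - 1)) (hGleH (x - 1) x (by linarith))
  have hH0 : ∀ x ≤ 0, H x = 0 := by
    intro x hx
    refine le_antisymm (ciSup_le fun y => le_of_eq (hG0 y.1 (le_of_lt (lt_of_lt_of_le y.2 hx)))) (hHnn x)
  have hHle1 : ∀ x, H x ≤ 1 := fun x => ciSup_le fun y => hGle1 y.1
  have hHddf : DDF H := by
    refine ⟨hHmono, hH0, hHle1, ?_⟩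
    intro x
    rw [tendsto_order]
    constructor
    · intro a ha
      obtain ⟨⟨y, hy⟩, hay⟩ := exists_lt_of_lt_ciSup ha
      filter_upwards [Ioo_mem_nhdsLT_of_mem (Set.mem_Ioc.2 ⟨hy, le_rfl⟩)] with z hz
      exact lt_of_lt_of_le hay (hGleH y z hz.1)
    · intro a ha
      filter_upwards [self_mem_nhdsWithin] with z hz
      exact lt_of_le_of_lt (hHmono (le_of_lt hz)) ha
  have hFleH : ∀ m, F m ≤ H := by
    intro m x
    by_contra hcon
    push_neg at hcon
    obtain ⟨y, hy, hy2⟩ := ddf_left_approx (hFddf m) x (F m x - H x) (by linarith)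
    have h1 : G y ≤ H x := hGleH y x hy
    have h2 : F m y ≤ G y := hFleG m y
    linarith
  have hGleTau : ∀ x, G x ≤ τs H H x := by
    intro x
    refine ciSup_le fun m => ?_
    calc F m x ≤ τs (F (m + 1)) (F (m + 1)) x := hstep m x
    _ ≤ τs H (F (m + 1)) x :=
        hν.tris.2.2.2.1 _ H _ (hFddf _) hHddf (hFddf _) (hFleH _) x
    _ ≤ τs H H x := tri_mono_right hν.tris hHddf (hFddf _) hHddf (hFleH _) x
  have hHleTau : H ≤ τs H H := by
    intro x
    refine ciSup_le fun y => ?_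
    exact (hGleTau y.1).trans ((hν.tris.1 H H hHddf hHddf).1 (le_of_lt y.2))
  have hfix : τs H H = H :=
    le_antisymm (tri_le_left hν.tris hHddf hHddf) hHleTau
  rcases harch H hHddf hfix with h0 | hinf
  · have h1 : H l = 1 := by rw [h0]; exact eps0_pos hl
    have h2 : 1 - l < H l := by rw [h1]; linarith
    obtain ⟨⟨y, hy⟩, hy2⟩ := exists_lt_of_lt_ciSup h2
    obtain ⟨m, hm⟩ := exists_lt_of_lt_ciSup hy2
    refine ⟨(2⁻¹:ℝ) ^ m, pow_pos (by norm_num) m, ?_⟩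
    intro t ht
    have h3 : ν ((2⁻¹:ℝ) ^ m • p) ≤ ν (|t| • p) := scalar_mono hν p (abs_nonneg t) ht
    calc 1 - l < F m y := hm
    _ ≤ F m l := (hFddf m).1 (le_of_lt hy)
    _ ≤ ν (|t| • p) l := h3 l
    _ = ν (t • p) l := by rw [← nu_abs_smul hν]
  · exfalso
    apply hne ((2⁻¹:ℝ) ^ 0 • p)
    funext x
    have h1 : F 0 x ≤ H x := hFleH 0 x
    rw [hinf] at h1
    exact le_antisymm h1 (ddf_nonneg (hFddf 0) x)

/-! ### Strong convergence lemmas -/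

lemma strong_congr {q q' : ℕ → V} {p : V} (h : ∀ n, q n = q' n)
    (hs : StrongConv ν q p) : StrongConv ν q' p := by
  have : q = q' := funext h
  rwa [← this]

lemma strong_const (hν : IsPNSpace V ν τ τs) (p : V) :
    StrongConv ν (fun _ => p) p := by
  intro l hl
  have h0 : ν (p - p) = eps0 := by
    rw [sub_self]; exact (hν.n1 0).2 rfl
  refine Eventually.of_forall fun n => ?_
  rw [h0, eps0_pos hl]
  linarith

lemma strong_add (hν : IsPNSpace V ν τ τs) {x y : ℕ → V} {p r : V}
    (hx : StrongConv ν x p) (hy : StrongConv ν y r) :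
    StrongConv ν (fun n => x n + y n) (p + r) := by
  intro l hl
  obtain ⟨a, ha, hT⟩ := tri_cont_zero hν.tri hl
  filter_upwards [hx a ha, hy a ha] with n h1 h2
  have h3 := hν.n3 (x n - p) (y n - r)
  have h4 : x n - p + (y n - r) = x n + y n - (p + r) := by abel
  rw [h4] at h3
  exact lt_of_lt_of_le (hT _ _ (hν.ddf _) (hν.ddf _) h1 h2) (h3 l)

lemma strong_subseq {q : ℕ → V} {p : V} {φ : ℕ → ℕ}
    (hφ : StrictMono φ) (h : StrongConv ν q p) : StrongConv ν (q ∘ φ) p := by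
  intro l hl
  exact hφ.tendsto_atTop.eventually (h l hl)

lemma strong_smul_null (hν : IsPNSpace V ν τ τs) (harch : IsArchimedean τs)
    (hne : ∀ p : V, ν p ≠ epsInf) (v : V) {t : ℕ → ℝ}
    (ht : Tendsto t atTop (𝓝 0)) : StrongConv ν (fun n => t n • v) 0 := by
  intro l hl
  obtain ⟨δ, hδ, hδ2⟩ := smul_null hν harch hne v hl
  filter_upwards [ht (Metric.ball_mem_nhds (0:ℝ) hδ)] with n hn
  have h1 : |t n| ≤ δ := le_of_lt (by simpa [Real.dist_eq] using hn)
  have h2 := hδ2 (t n) h1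
  simpa [sub_zero] using h2

lemma strong_smul_bdd (hν : IsPNSpace V ν τ τs) {s : ℕ → V} {t : ℕ → ℝ}
    (ht : ∀ n, 0 ≤ t n) (ht1 : ∀ n, t n ≤ 1)
    (hs : StrongConv ν s 0) : StrongConv ν (fun n => t n • s n) 0 := by
  intro l hl
  filter_upwards [hs l hl] with n hn
  have h1 : ν ((1:ℝ) • s n) ≤ ν (t n • s n) := scalar_mono hν (s n) (ht n) (ht1 n)
  rw [one_smul] at h1
  rw [sub_zero] at hn ⊢
  exact lt_of_lt_of_le hn (h1 l)

lemma limit_unique (hν : IsPNSpace V ν τ τs) {u : ℕ → V} {p1 p2 : V}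
    (h1 : StrongConv ν u p1) (h2 : StrongConv ν u p2) : p1 = p2 := by
  have key : ∀ l, 0 < l → 1 - l < ν (p1 - p2) l := by
    intro l hl
    obtain ⟨a, ha, hT⟩ := tri_cont_zero hν.tri hl
    obtain ⟨n, hn1, hn2⟩ := ((h1 a ha).and (h2 a ha)).exists
    have h3 := hν.n3 (p1 - u n) (u n - p2)
    have h4 : p1 - u n + (u n - p2) = p1 - p2 := by abel
    rw [h4] at h3
    have h5 : ν (p1 - u n) = ν (u n - p1) := by
      rw [show p1 - u n = -(u n - p1) by abel, hν.n2]
    refine lt_of_lt_of_le (hT _ _ (hν.ddf _) (hν.ddf _) ?_ hn2) (h3 l)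
    rw [h5]
    exact hn1
  have he := eps0_of_forall (hν.ddf _) key
  exact sub_eq_zero.1 ((hν.n1 _).1 he)

lemma strong_sum {ι : Type} [Fintype ι] (hν : IsPNSpace V ν τ τs)
    (harch : IsArchimedean τs) (hne : ∀ p : V, ν p ≠ epsInf)
    (b : ι → V) (f : ℕ → ι → ℝ) (hf : ∀ i, Tendsto (fun n => f n i) atTop (𝓝 0))
    (s : Finset ι) : StrongConv ν (fun n => ∑ i ∈ s, f n i • b i) 0 := by
  classical
  induction s using Finset.induction_on with
  | empty =>
      refine strong_congr (fun n => ?_) (strong_const hν 0)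
      rw [Finset.sum_empty]
  | insert a s hnotmem ih =>
      have h1 : StrongConv ν (fun n => f n a • b a) 0 :=
        strong_smul_null hν harch hne (b a) (hf a)
      have h2 := strong_add hν h1 ih
      rw [add_zero] at h2
      refine strong_congr (fun n => ?_) h2
      rw [Finset.sum_insert hnotmem]

/-- Coordinate convergence implies strong convergence. -/
lemma strong_of_coords [FiniteDimensional ℝ V]
    (hν : IsPNSpace V ν τ τs) (harch : IsArchimedean τs)
    (hne : ∀ p : V, ν p ≠ epsInf) (q : ℕ → V) (p : V)
    (hc : ∀ i, Tendsto (fun n => (Module.finBasis ℝ V).repr (q n - p) i) atTop (𝓝 0)) :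
    StrongConv ν q p := by
  set b := Module.finBasis ℝ V with hbdef
  have h1 : StrongConv ν (fun n => ∑ i, b.repr (q n - p) i • b i) 0 :=
    strong_sum hν harch hne (fun i => b i) (fun n i => b.repr (q n - p) i) hc Finset.univ
  have h2 : StrongConv ν (fun n => q n - p) 0 :=
    strong_congr (fun n => b.sum_repr (q n - p)) h1
  intro l hl
  filter_upwards [h2 l hl] with n hn
  rwa [sub_zero] at hn

/-- Strong convergence is equivalent to coordinate convergence. -/
lemma strong_iff_coords [FiniteDimensional ℝ V]
    (hν : IsPNSpace V ν τ τs) (harch : IsArchimedean τs)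
    (hne : ∀ p : V, ν p ≠ epsInf) (q : ℕ → V) (p : V) :
    StrongConv ν q p ↔
      ∀ i, Tendsto (fun n => (Module.finBasis ℝ V).repr (q n - p) i) atTop (𝓝 0) := by
  constructor
  · intro hs
    by_contra hcon
    push_neg at hcon
    obtain ⟨i, hi⟩ := hcon
    set b := Module.finBasis ℝ V with hbdef
    rw [Metric.tendsto_atTop] at hi
    push_neg at hi
    obtain ⟨ε, hε, hfreq⟩ := hi
    have hfr : ∃ᶠ n in atTop, ε ≤ |b.repr (q n - p) i| := by
      rw [frequently_atTop]
      intro N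
      obtain ⟨n, hn1, hn2⟩ := hfreq N
      exact ⟨n, hn1, by simpa [Real.dist_eq] using hn2⟩
    obtain ⟨φ, hφ, hφ2⟩ := extraction_of_frequently_atTop hfr
    set s : ℕ → V := fun n => q (φ n) - p with hsdef
    have hs0 : StrongConv ν s 0 := by
      intro l hl
      have := strong_subseq hφ hs l hl
      filter_upwards [this] with n hn
      simpa [hsdef, sub_zero] using hn
    set c : ℕ → (Fin (Module.finrank ℝ V) → ℝ) := fun n j => b.repr (s n) j with hcdef
    have hεc : ∀ n, ε ≤ ‖c n‖ := by
      intro n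
      have h1 : ε ≤ |c n i| := hφ2 n
      calc ε ≤ |c n i| := h1
      _ = ‖c n i‖ := (Real.norm_eq_abs _).symm
      _ ≤ ‖c n‖ := norm_le_pi_norm (c n) i
    have hcpos : ∀ n, 0 < ‖c n‖ := fun n => lt_of_lt_of_le hε (hεc n)
    set t : ℕ → ℝ := fun n => ε / ‖c n‖ with htdef
    have ht0 : ∀ n, 0 < t n := fun n => div_pos hε (hcpos n)
    have ht1 : ∀ n, t n ≤ 1 := fun n => (div_le_one (hcpos n)).2 (hεc n)
    set w : ℕ → V := fun n => t n • s n with hwdef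
    have hw0 : StrongConv ν w 0 :=
      strong_smul_bdd hν (fun n => (ht0 n).le) ht1 hs0
    set d : ℕ → (Fin (Module.finrank ℝ V) → ℝ) := fun n => t n • c n with hddef
    have hd : ∀ n j, b.repr (w n) j = d n j := by
      intro n j
      show b.repr (t n • s n) j = t n * c n j
      rw [map_smul, Finsupp.smul_apply, smul_eq_mul]
    have hdnorm : ∀ n, ‖d n‖ = ε := by
      intro n
      rw [hddef]
      show ‖t n • c n‖ = ε
      rw [norm_smul, Real.norm_eq_abs, abs_of_pos (ht0 n)]
      exact div_mul_cancel₀ ε (ne_of_gt (hcpos n))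
    have hmem : ∀ n, d n ∈ Metric.sphere (0 : Fin (Module.finrank ℝ V) → ℝ) ε := by
      intro n
      rw [Metric.mem_sphere, dist_zero_right]
      exact hdnorm n
    obtain ⟨cl, hcl, ψ, hψ, hlim⟩ :=
      (isCompact_sphere (0 : Fin (Module.finrank ℝ V) → ℝ) ε).tendsto_subseq hmem
    set v : V := ∑ j, cl j • b j with hvdef
    have hreprv : ∀ j, b.repr v j = cl j := by
      intro j
      rw [hvdef]
      exact congrFun (b.repr_sum_self cl) j
    have hwψv : StrongConv ν (w ∘ ψ) v := by
      apply strong_of_coords hν harch hne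
      intro j
      have hj : Tendsto (fun n => d (ψ n) j) atTop (𝓝 (cl j)) :=
        tendsto_pi_nhds.1 hlim j
      have heq : ∀ n, b.repr ((w ∘ ψ) n - v) j = d (ψ n) j - cl j := by
        intro n
        rw [map_sub, Finsupp.sub_apply, hreprv j, show (w ∘ ψ) n = w (ψ n) from rfl, hd (ψ n) j]
      have h2 : Tendsto (fun n => d (ψ n) j - cl j) atTop (𝓝 (cl j - cl j)) :=
        hj.sub tendsto_const_nhds
      rw [sub_self] at h2
      exact h2.congr fun n => (heq n).symm
    have hwψ0 : StrongConv ν (w ∘ ψ) 0 := strong_subseq hψ hw0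
    have hv0 : v = 0 := limit_unique hν hwψv hwψ0
    have hcl0 : cl = 0 := by
      funext j
      have := hreprv j
      rw [hv0] at this
      simpa using this.symm
    rw [Metric.mem_sphere, hcl0, dist_self] at hcl
    exact absurd hcl.symm (ne_of_gt hε)
  · exact strong_of_coords hν harch hne q p

end PNAux

/-- On a finite dimensional space, any two strong-TVS probabilistic norms are
equivalent: they have the same strongly convergent sequences. -/
theorem statement9 {V : Type} [AddCommGroup V] [Module ℝ V]
    [FiniteDimensional ℝ V]
    (ν μ : V → ℝ → ℝ) (τ τs τ' τ's : (ℝ → ℝ) → (ℝ → ℝ) → (ℝ → ℝ))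
    (hν : IsPNSpace V ν τ τs) (hμ : IsPNSpace V μ τ' τ's)
    (harch : IsArchimedean τs) (harch' : IsArchimedean τ's)
    (hne : ∀ p : V, ν p ≠ epsInf) (hne' : ∀ p : V, μ p ≠ epsInf) :
    ∀ (q : ℕ → V) (p : V), StrongConv ν q p ↔ StrongConv μ q p := by
  intro q p
  rw [PNAux.strong_iff_coords hν harch hne q p,
    PNAux.strong_iff_coords hμ harch' hne' q p]
end
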